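/- arXiv:1609.00503 — 2 statements merged into one kernel-verified Lean document; each statement's English description precedes it below -/
import Mathlib

section
/- Let G₂(x,t) = x⁴ + 6(t² + 1)x² + 5t⁴ + 18t² − 3, H₂(x,t) = x⁴ + 2(t² − 3)x² + (t² + 5)(t² − 3), and D₂(x,t) = x⁶ + 3(t² + 1)x⁴ + 3(t² − 3)²x² + t⁶ + 27t⁴ + 99t² + 9. Then D₂(x,t) > 0 for all real x, t, and the function ψ₂(x,t) = (1 − 12·(G₂(x,t) + i·t·H₂(x,t))/D₂(x,t))·exp(it/2), regarded as a function ℝ² → ℂ, satisfies the focusing nonlinear Schrödinger equation i·ψ_t + ψ_xx + (1/2)|ψ|²·ψ = 0 for all (x,t) ∈ ℝ². -/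
lemma hasDerivAt_poly6 (a0 a1 a2 a3 a4 a5 a6 z : ℂ) {f : ℂ → ℂ}
    (hf : ∀ u, f u = a0 + a1*u + a2*u^2 + a3*u^3 + a4*u^4 + a5*u^5 + a6*u^6) :
    HasDerivAt f (a1 + 2*a2*z + 3*a3*z^2 + 4*a4*z^3 + 5*a5*z^4 + 6*a6*z^5) z := by
  have hfe : f = fun u => a0 + a1*u + a2*u^2 + a3*u^3 + a4*u^4 + a5*u^5 + a6*u^6 := funext hf
  rw [hfe]
  have h := (((((((hasDerivAt_const z a0).add (((hasDerivAt_id z).const_mul a1))).add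
      ((hasDerivAt_pow 2 z).const_mul a2)).add ((hasDerivAt_pow 3 z).const_mul a3)).add
      ((hasDerivAt_pow 4 z).const_mul a4)).add ((hasDerivAt_pow 5 z).const_mul a5)).add
      ((hasDerivAt_pow 6 z).const_mul a6))
  refine h.congr_deriv ?_
  push_cast
  ring

/-- Partial derivative in the first (space) variable, for complex-valued functions. -/
noncomputable def dXC (f : ℝ → ℝ → ℂ) : ℝ → ℝ → ℂ := fun x t => deriv (fun x' => f x' t) x

/-- Partial derivative in the second (time) variable, for complex-valued functions. -/
noncomputable def dTC (f : ℝ → ℝ → ℂ) : ℝ → ℝ → ℂ := fun x t => deriv (fun t' => f x t') t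

/-- The focusing nonlinear Schrödinger equation `i ψ_t + ψ_xx + (1/2)|ψ|² ψ = 0`. -/
def IsFocusingNLSSolution (ψ : ℝ → ℝ → ℂ) : Prop :=
  ∀ x t : ℝ,
    Complex.I * dTC ψ x t + dXC (dXC ψ) x t
      + (1 / 2) * ((‖ψ x t‖ : ℂ)) ^ 2 * ψ x t = 0

/-- `G₂(x,t) = x⁴ + 6(t²+1)x² + 5t⁴ + 18t² − 3`. -/
noncomputable def G2 (x t : ℝ) : ℝ :=
  x ^ 4 + 6 * (t ^ 2 + 1) * x ^ 2 + 5 * t ^ 4 + 18 * t ^ 2 - 3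

/-- `H₂(x,t) = x⁴ + 2(t²−3)x² + (t²+5)(t²−3)`. -/
noncomputable def H2 (x t : ℝ) : ℝ :=
  x ^ 4 + 2 * (t ^ 2 - 3) * x ^ 2 + (t ^ 2 + 5) * (t ^ 2 - 3)

/-- `D₂(x,t) = x⁶ + 3(t²+1)x⁴ + 3(t²−3)²x² + t⁶ + 27t⁴ + 99t² + 9`. -/
noncomputable def D2 (x t : ℝ) : ℝ :=
  x ^ 6 + 3 * (t ^ 2 + 1) * x ^ 4 + 3 * (t ^ 2 - 3) ^ 2 * x ^ 2
    + t ^ 6 + 27 * t ^ 4 + 99 * t ^ 2 + 9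

/-- The second rational solution `ψ₂` of the focusing NLS equation. -/
noncomputable def psi2 (x t : ℝ) : ℂ :=
  (1 - 12 * (((G2 x t : ℝ) : ℂ) + Complex.I * (t : ℂ) * ((H2 x t : ℝ) : ℂ))
      / ((D2 x t : ℝ) : ℂ)) * Complex.exp (Complex.I * (t : ℂ) / 2)
noncomputable def Pn (z w : ℂ) : ℂ := 45 + 180*w*Complex.I - 117*w^2 - 24*w^3*Complex.I - 33*w^4 - 12*w^5*Complex.I + w^6 - 45*z^2 + 72*z^2*w*Complex.I - 90*z^2*w^2 - 24*z^2*w^3*Complex.I + 3*z^2*w^4 - 9*z^4 - 12*z^4*w*Complex.I + 3*z^4*w^2 + z^6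

noncomputable def PnB (z w : ℂ) : ℂ := 45 - 180*w*Complex.I - 117*w^2 + 24*w^3*Complex.I - 33*w^4 + 12*w^5*Complex.I + w^6 - 45*z^2 - 72*z^2*w*Complex.I - 90*z^2*w^2 + 24*z^2*w^3*Complex.I + 3*z^2*w^4 - 9*z^4 + 12*z^4*w*Complex.I + 3*z^4*w^2 + z^6

noncomputable def Pd (z w : ℂ) : ℂ := 9 + 99*w^2 + 27*w^4 + w^6 + 27*z^2 - 18*z^2*w^2 + 3*z^2*w^4 + 3*z^4 + 3*z^4*w^2 + z^6

noncomputable def Pnx (z w : ℂ) : ℂ := -90*z + 144*z*w*Complex.I - 180*z*w^2 - 48*z*w^3*Complex.I + 6*z*w^4 - 36*z^3 - 48*z^3*w*Complex.I + 12*z^3*w^2 + 6*z^5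

noncomputable def Pnxx (z w : ℂ) : ℂ := -90 + 144*w*Complex.I - 180*w^2 - 48*w^3*Complex.I + 6*w^4 - 108*z^2 - 144*z^2*w*Complex.I + 36*z^2*w^2 + 30*z^4

noncomputable def Pdx (z w : ℂ) : ℂ := 54*z - 36*z*w^2 + 6*z*w^4 + 12*z^3 + 12*z^3*w^2 + 6*z^5

noncomputable def Pdxx (z w : ℂ) : ℂ := 54 - 36*w^2 + 6*w^4 + 36*z^2 + 36*z^2*w^2 + 30*z^4

noncomputable def Pnt (z w : ℂ) : ℂ := 180*Complex.I - 234*w - 72*w^2*Complex.I - 132*w^3 - 60*w^4*Complex.I + 6*w^5 + 72*z^2*Complex.I - 180*z^2*w - 72*z^2*w^2*Complex.I + 12*z^2*w^3 - 12*z^4*Complex.I + 6*z^4*w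

noncomputable def Pdt (z w : ℂ) : ℂ := 198*w + 108*w^3 + 6*w^5 - 36*z^2*w + 12*z^2*w^3 + 6*z^4*w

lemma dPn (z w : ℂ) : HasDerivAt (fun u => Pn u w) (Pnx z w) z := by
  have h := hasDerivAt_poly6 (45 + 180*w*Complex.I - 117*w^2 - 24*w^3*Complex.I - 33*w^4 - 12*w^5*Complex.I + w^6) (0) (-45 + 72*w*Complex.I - 90*w^2 - 24*w^3*Complex.I + 3*w^4) (0) (-9 - 12*w*Complex.I + 3*w^2) (0) (1) z
    (f := fun u => Pn u w) (fun u => by simp only [Pn]; ring)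
  have e : ((0) + 2*(-45 + 72*w*Complex.I - 90*w^2 - 24*w^3*Complex.I + 3*w^4)*z + 3*(0)*z^2 + 4*(-9 - 12*w*Complex.I + 3*w^2)*z^3 + 5*(0)*z^4 + 6*(1)*z^5) = Pnx z w := by simp only [Pnx]; ring
  exact e ▸ h

lemma dPnx (z w : ℂ) : HasDerivAt (fun u => Pnx u w) (Pnxx z w) z := by
  have h := hasDerivAt_poly6 (0) (-90 + 144*w*Complex.I - 180*w^2 - 48*w^3*Complex.I + 6*w^4) (0) (-36 - 48*w*Complex.I + 12*w^2) (0) (6) (0) z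
    (f := fun u => Pnx u w) (fun u => by simp only [Pnx]; ring)
  have e : ((-90 + 144*w*Complex.I - 180*w^2 - 48*w^3*Complex.I + 6*w^4) + 2*(0)*z + 3*(-36 - 48*w*Complex.I + 12*w^2)*z^2 + 4*(0)*z^3 + 5*(6)*z^4 + 6*(0)*z^5) = Pnxx z w := by simp only [Pnxx]; ring
  exact e ▸ h

lemma dPd (z w : ℂ) : HasDerivAt (fun u => Pd u w) (Pdx z w) z := by
  have h := hasDerivAt_poly6 (9 + 99*w^2 + 27*w^4 + w^6) (0) (27 - 18*w^2 + 3*w^4) (0) (3 + 3*w^2) (0) (1) z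
    (f := fun u => Pd u w) (fun u => by simp only [Pd]; ring)
  have e : ((0) + 2*(27 - 18*w^2 + 3*w^4)*z + 3*(0)*z^2 + 4*(3 + 3*w^2)*z^3 + 5*(0)*z^4 + 6*(1)*z^5) = Pdx z w := by simp only [Pdx]; ring
  exact e ▸ h

lemma dPdx (z w : ℂ) : HasDerivAt (fun u => Pdx u w) (Pdxx z w) z := by
  have h := hasDerivAt_poly6 (0) (54 - 36*w^2 + 6*w^4) (0) (12 + 12*w^2) (0) (6) (0) z
    (f := fun u => Pdx u w) (fun u => by simp only [Pdx]; ring)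
  have e : ((54 - 36*w^2 + 6*w^4) + 2*(0)*z + 3*(12 + 12*w^2)*z^2 + 4*(0)*z^3 + 5*(6)*z^4 + 6*(0)*z^5) = Pdxx z w := by simp only [Pdxx]; ring
  exact e ▸ h

lemma dPnT (z w : ℂ) : HasDerivAt (fun u => Pn z u) (Pnt z w) w := by
  have h := hasDerivAt_poly6 (45 - 45*z^2 - 9*z^4 + z^6) (180*Complex.I + 72*z^2*Complex.I - 12*z^4*Complex.I) (-117 - 90*z^2 + 3*z^4) (-24*Complex.I - 24*z^2*Complex.I) (-33 + 3*z^2) (-12*Complex.I) (1) w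
    (f := fun u => Pn z u) (fun u => by simp only [Pn]; ring)
  have e : ((180*Complex.I + 72*z^2*Complex.I - 12*z^4*Complex.I) + 2*(-117 - 90*z^2 + 3*z^4)*w + 3*(-24*Complex.I - 24*z^2*Complex.I)*w^2 + 4*(-33 + 3*z^2)*w^3 + 5*(-12*Complex.I)*w^4 + 6*(1)*w^5) = Pnt z w := by simp only [Pnt]; ring
  exact e ▸ h

lemma dPdT (z w : ℂ) : HasDerivAt (fun u => Pd z u) (Pdt z w) w := by
  have h := hasDerivAt_poly6 (9 + 27*z^2 + 3*z^4 + z^6) (0) (99 - 18*z^2 + 3*z^4) (0) (27 + 3*z^2) (0) (1) w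
    (f := fun u => Pd z u) (fun u => by simp only [Pd]; ring)
  have e : ((0) + 2*(99 - 18*z^2 + 3*z^4)*w + 3*(0)*w^2 + 4*(27 + 3*z^2)*w^3 + 5*(0)*w^4 + 6*(1)*w^5) = Pdt z w := by simp only [Pdt]; ring
  exact e ▸ h

lemma main_poly (z w : ℂ) :
    Complex.I * ((Pnt z w * Pd z w - Pn z w * Pdt z w) + Complex.I/2 * (Pn z w * Pd z w)) * (Pd z w)^2
      + (((Pnxx z w * Pd z w + Pnx z w * Pdx z w) - (Pnx z w * Pdx z w + Pn z w * Pdxx z w)) * (Pd z w)^2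
          - (Pnx z w * Pd z w - Pn z w * Pdx z w) * (2 * Pd z w * Pdx z w))
      + (1/2) * (Pn z w * PnB z w * Pn z w * Pd z w) = 0 := by
  simp only [Pn, PnB, Pd, Pnx, Pnxx, Pdx, Pdxx, Pnt, Pdt]
  linear_combination ((295245/2) + 65610*w*Complex.I - 4671432*w^2 - 24087618*w^3*Complex.I - 66342645*w^4 - 254072538*w^5*Complex.I - 15725988*w^6 + 137531682*w^7*Complex.I + (-544429593/2)*w^8 + 128275812*w^9*Complex.I - 244959552*w^10 + 3492396*w^11*Complex.I - 79807518*w^12 - 11025396*w^13*Complex.I - 10577304*w^14 - 2087100*w^15*Complex.I + (-577557/2)*w^16 - 40014*w^17*Complex.I + 34920*w^18 + 12726*w^19*Complex.I + 387*w^20 + 366*w^21*Complex.I - 36*w^22 - 6*w^23*Complex.I + (1/2)*w^24 + 1364688*z^2 + 616734*z^2*w*Complex.I - 7728858*z^2*w^2 - 96849108*z^2*w^3*Complex.I + 52216812*z^2*w^4 - 169391898*z^2*w^5*Complex.I + 68162958*z^2*w^6 + 113758992*z^2*w^7*Complex.I - 200725776*z^2*w^8 + 54397980*z^2*w^9*Complex.I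 - 126677844*z^2*w^10 - 10242936*z^2*w^11*Complex.I - 19268280*z^2*w^12 - 4943268*z^2*w^13*Complex.I + 781164*z^2*w^14 - 81648*z^2*w^15*Complex.I + 294624*z^2*w^16 + 80838*z^2*w^17*Complex.I + 7470*z^2*w^18 + 4140*z^2*w^19*Complex.I - 468*z^2*w^20 - 66*z^2*w^21*Complex.I + 6*z^2*w^22 + 4446171*z^4 + 2068902*z^4*w*Complex.I + 21791268*z^4*w^2 - 87370650*z^4*w^3*Complex.I + 92656629*z^4*w^4 + 53205336*z^4*w^5*Complex.I - 45458496*z^4*w^6 + 29387448*z^4*w^7*Complex.I - 26412642*z^4*w^8 - 4428108*z^4*w^9*Complex.I - 16383384*z^4*w^10 - 6939756*z^4*w^11*Complex.I - 1548774*z^4*w^12 - 809352*z^4*w^13*Complex.I + 716256*z^4*w^14 + 160920*z^4*w^15*Complex.I + 49239*z^4*w^16 + 19926*z^4*w^17*Complex.I - 2604*z^4*w^18 - 330*z^4*w^19*Complex.I + 33*z^4*w^20 + 5823252*z^6 + 2882466*z^6*w*Complex.I + 15161742*z^6*w^2 - 25462512*z^6*w^3*Complex.I + 14548896*z^6*w^4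 + 62139960*z^6*w^5*Complex.I - 63547416*z^6*w^6 - 9467280*z^6*w^7*Complex.I - 30978936*z^6*w^8 - 842292*z^6*w^9*Complex.I - 2840076*z^6*w^10 - 1193616*z^6*w^11*Complex.I + 313920*z^6*w^12 + 21816*z^6*w^13*Complex.I + 161064*z^6*w^14 + 54288*z^6*w^15*Complex.I - 8316*z^6*w^16 - 990*z^6*w^17*Complex.I + 110*z^6*w^18 + (5084775/2)*z^8 + 1495908*z^8*w*Complex.I + 1866240*z^8*w^2 + 2469852*z^8*w^3*Complex.I - 14056578*z^8*w^4 + 4633524*z^8*w^5*Complex.I - 11737224*z^8*w^6 - 4882356*z^8*w^7*Complex.I + 3536865*z^8*w^8 + 433836*z^8*w^9*Complex.I - 1031184*z^8*w^10 - 366444*z^8*w^11*Complex.I + 301878*z^8*w^12 + 92988*z^8*w^13*Complex.I - 17064*z^8*w^14 - 1980*z^8*w^15*Complex.I + (495/2)*z^8*w^16 + 641520*z^10 + 428652*z^10*w*Complex.I - 1577556*z^10*w^2 + 1701000*z^10*w^3*Complex.I - 2341224*z^10*w^4 - 2885868*z^10*w^5*Complex.I + 1016820*z^10*w^6 + 1419120*z^10*w^7*Complex.I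 - 1517184*z^10*w^8 - 582444*z^10*w^9*Complex.I + 342612*z^10*w^10 + 104328*z^10*w^11*Complex.I - 23688*z^10*w^12 - 2772*z^10*w^13*Complex.I + 396*z^10*w^14 + 137538*z^12 + 109836*z^12*w*Complex.I - 617544*z^12*w^2 - 59940*z^12*w^3*Complex.I - 176742*z^12*w^4 + 600696*z^12*w^5*Complex.I - 760608*z^12*w^6 - 403272*z^12*w^7*Complex.I + 235350*z^12*w^8 + 76860*z^12*w^9*Complex.I - 22680*z^12*w^10 - 2772*z^12*w^11*Complex.I + 462*z^12*w^12 + 1944*z^14 + 10692*z^14*w*Complex.I - 89748*z^14*w^2 + 42768*z^14*w^3*Complex.I - 150336*z^14*w^4 - 132840*z^14*w^5*Complex.I + 91944*z^14*w^6 + 35856*z^14*w^7*Complex.I - 14904*z^14*w^8 - 1980*z^14*w^9*Complex.I + 396*z^14*w^10 + (-405/2)*z^16 + 1458*z^16*w*Complex.I - 19224*z^16*w^2 - 16794*z^16*w^3*Complex.I + 16839*z^16*w^4 + 9558*z^16*w^5*Complex.I - 6516*z^16*w^6 - 990*z^16*w^7*Complex.I + (495/2)*z^16*w^8 - 864*z^18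 - 234*z^18*w*Complex.I + 558*z^18*w^2 + 1068*z^18*w^3*Complex.I - 1764*z^18*w^4 - 330*z^18*w^5*Complex.I + 110*z^18*w^6 - 45*z^20 - 18*z^20*w*Complex.I - 252*z^20*w^2 - 66*z^20*w^3*Complex.I + 33*z^20*w^4 - 12*z^22 - 6*z^22*w*Complex.I + 6*z^22*w^2 + (1/2)*z^24) * Complex.I_sq

lemma hD2pos (x t : ℝ) : 0 < D2 x t := by unfold D2; positivity

lemma hPdc (x t : ℝ) : Pd (x:ℂ) (t:ℂ) = ((D2 x t : ℝ) : ℂ) := by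
  simp only [Pd, D2]; push_cast; ring

lemma hPdne (x t : ℝ) : Pd (x:ℂ) (t:ℂ) ≠ 0 := by
  rw [hPdc]; exact_mod_cast (hD2pos x t).ne'

noncomputable def Ra (x t : ℝ) : ℝ := D2 x t - 12 * G2 x t
noncomputable def Rb (x t : ℝ) : ℝ := -(12 * t * H2 x t)

lemma hPnc (x t : ℝ) : Pn (x:ℂ) (t:ℂ) = ((Ra x t : ℝ) : ℂ) + ((Rb x t : ℝ) : ℂ) * Complex.I := by
  simp only [Pn, Ra, Rb, D2, G2, H2]; push_cast; ring

lemma hPnBc (x t : ℝ) : PnB (x:ℂ) (t:ℂ) = ((Ra x t : ℝ) : ℂ) - ((Rb x t : ℝ) : ℂ) * Complex.I := by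
  simp only [PnB, Ra, Rb, D2, G2, H2]; push_cast; ring

lemma hpsi (x t : ℝ) :
    psi2 x t = Pn (x:ℂ) (t:ℂ) / Pd (x:ℂ) (t:ℂ) * Complex.exp (Complex.I * (t:ℂ) / 2) := by
  have h : ((D2 x t : ℝ) : ℂ) ≠ 0 := by exact_mod_cast (hD2pos x t).ne'
  unfold psi2
  rw [← hPdc]
  congr 1
  rw [eq_div_iff (hPdne x t), sub_mul, one_mul, div_mul_cancel₀ _ (hPdne x t)]
  simp only [Pn, Pd, G2, H2, D2]
  push_cast
  ring

lemma hderivX (x t : ℝ) :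
    HasDerivAt (fun x' : ℝ => psi2 x' t)
      ((Pnx (x:ℂ) (t:ℂ) * Pd (x:ℂ) (t:ℂ) - Pn (x:ℂ) (t:ℂ) * Pdx (x:ℂ) (t:ℂ)) / Pd (x:ℂ) (t:ℂ) ^ 2
        * Complex.exp (Complex.I * (t:ℂ) / 2)) x := by
  have h := (((dPn (x:ℂ) (t:ℂ)).div (dPd (x:ℂ) (t:ℂ)) (hPdne x t)).mul_const
      (Complex.exp (Complex.I * (t:ℂ) / 2))).comp_ofReal
  have hf : (fun x' : ℝ => psi2 x' t)
      = fun y : ℝ => Pn (y:ℂ) (t:ℂ) / Pd (y:ℂ) (t:ℂ) * Complex.exp (Complex.I * (t:ℂ) / 2) :=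
    funext fun y => hpsi y t
  rw [hf]
  exact h

lemma hdXC (x t : ℝ) :
    dXC psi2 x t = (Pnx (x:ℂ) (t:ℂ) * Pd (x:ℂ) (t:ℂ) - Pn (x:ℂ) (t:ℂ) * Pdx (x:ℂ) (t:ℂ))
      / Pd (x:ℂ) (t:ℂ) ^ 2 * Complex.exp (Complex.I * (t:ℂ) / 2) := by
  unfold dXC
  exact (hderivX x t).deriv

lemma hdXXC (x t : ℝ) :
    dXC (dXC psi2) x t =
      (((Pnxx (x:ℂ) (t:ℂ) * Pd (x:ℂ) (t:ℂ) + Pnx (x:ℂ) (t:ℂ) * Pdx (x:ℂ) (t:ℂ))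
          - (Pnx (x:ℂ) (t:ℂ) * Pdx (x:ℂ) (t:ℂ) + Pn (x:ℂ) (t:ℂ) * Pdxx (x:ℂ) (t:ℂ)))
          * Pd (x:ℂ) (t:ℂ) ^ 2
        - (Pnx (x:ℂ) (t:ℂ) * Pd (x:ℂ) (t:ℂ) - Pn (x:ℂ) (t:ℂ) * Pdx (x:ℂ) (t:ℂ))
          * ((2:ℕ) * Pd (x:ℂ) (t:ℂ) ^ 1 * Pdx (x:ℂ) (t:ℂ)))
        / (Pd (x:ℂ) (t:ℂ) ^ 2) ^ 2 * Complex.exp (Complex.I * (t:ℂ) / 2) := by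
  have num := ((dPnx (x:ℂ) (t:ℂ)).mul (dPd (x:ℂ) (t:ℂ))).sub
      ((dPn (x:ℂ) (t:ℂ)).mul (dPdx (x:ℂ) (t:ℂ)))
  have h := ((num.div ((dPd (x:ℂ) (t:ℂ)).pow 2) (pow_ne_zero 2 (hPdne x t))).mul_const
      (Complex.exp (Complex.I * (t:ℂ) / 2))).comp_ofReal
  have hf : (fun x' : ℝ => dXC psi2 x' t)
      = fun y : ℝ => (Pnx (y:ℂ) (t:ℂ) * Pd (y:ℂ) (t:ℂ) - Pn (y:ℂ) (t:ℂ) * Pdx (y:ℂ) (t:ℂ))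
          / Pd (y:ℂ) (t:ℂ) ^ 2 * Complex.exp (Complex.I * (t:ℂ) / 2) :=
    funext fun y => hdXC y t
  show deriv (fun x' : ℝ => dXC psi2 x' t) x = _
  rw [hf]
  exact h.deriv

lemma hdTC (x t : ℝ) :
    dTC psi2 x t =
      (Pnt (x:ℂ) (t:ℂ) * Pd (x:ℂ) (t:ℂ) - Pn (x:ℂ) (t:ℂ) * Pdt (x:ℂ) (t:ℂ)) / Pd (x:ℂ) (t:ℂ) ^ 2
          * Complex.exp (Complex.I * (t:ℂ) / 2)
        + Pn (x:ℂ) (t:ℂ) / Pd (x:ℂ) (t:ℂ)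
          * (Complex.exp (Complex.I * (t:ℂ) / 2) * (Complex.I * 1 / 2)) := by
  have hE : HasDerivAt (fun w : ℂ => Complex.exp (Complex.I * w / 2))
      (Complex.exp (Complex.I * (t:ℂ) / 2) * (Complex.I * 1 / 2)) (t:ℂ) :=
    (((hasDerivAt_id (t:ℂ)).const_mul Complex.I).div_const 2).cexp
  have h := ((((dPnT (x:ℂ) (t:ℂ)).div (dPdT (x:ℂ) (t:ℂ)) (hPdne x t)).mul hE)).comp_ofReal
  have hf : (fun t' : ℝ => psi2 x t')
      = fun u : ℝ => Pn (x:ℂ) (u:ℂ) / Pd (x:ℂ) (u:ℂ) * Complex.exp (Complex.I * (u:ℂ) / 2) :=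
    funext fun u => hpsi x u
  show deriv (fun t' : ℝ => psi2 x t') t = _
  rw [hf]
  exact h.deriv

lemma habs (x t : ℝ) :
    ((‖psi2 x t‖ : ℝ) : ℂ) ^ 2
      = Pn (x:ℂ) (t:ℂ) * PnB (x:ℂ) (t:ℂ) / Pd (x:ℂ) (t:ℂ) ^ 2 := by
  have hd : ((D2 x t : ℝ) : ℂ) ≠ 0 := by exact_mod_cast (hD2pos x t).ne'
  have h1 : ‖psi2 x t‖ ^ 2 = (Ra x t ^ 2 + Rb x t ^ 2) / D2 x t ^ 2 := by
    rw [hpsi x t, norm_mul, norm_div, hPnc x t, hPdc x t,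
      show Complex.I * (t:ℂ) / 2 = ((t/2 : ℝ) : ℂ) * Complex.I from by push_cast; ring,
      Complex.norm_exp_ofReal_mul_I, mul_one, div_pow, Complex.sq_norm, Complex.sq_norm,
      Complex.normSq_add_mul_I, Complex.normSq_ofReal]
    ring
  have h2 : ((‖psi2 x t‖ : ℝ) : ℂ) ^ 2
      = (((Ra x t ^ 2 + Rb x t ^ 2) / D2 x t ^ 2 : ℝ) : ℂ) := by
    rw [← h1]; push_cast; ring
  rw [h2, hPnc, hPnBc, hPdc]
  have h3 : (((Ra x t : ℝ) : ℂ) + ((Rb x t : ℝ) : ℂ) * Complex.I)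
      * (((Ra x t : ℝ) : ℂ) - ((Rb x t : ℝ) : ℂ) * Complex.I)
      = ((Ra x t : ℝ) : ℂ) ^ 2 + ((Rb x t : ℝ) : ℂ) ^ 2 := by
    linear_combination (-((Rb x t : ℝ) : ℂ) ^ 2) * Complex.I_sq
  rw [h3]
  push_cast
  ring

theorem psi2_solves_NLS :
    (∀ x t : ℝ, 0 < D2 x t) ∧ IsFocusingNLSSolution psi2 := by
  refine ⟨hD2pos, ?_⟩
  intro x t
  rw [hdTC x t, hdXXC x t, habs x t, hpsi x t]
  have key := main_poly (x:ℂ) (t:ℂ)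
  have hne := hPdne x t
  have hEne : Complex.exp (Complex.I * (t:ℂ) / 2) ≠ 0 := Complex.exp_ne_zero _
  field_simp
  linear_combination (norm := skip) (2 * Complex.exp (Complex.I * (t:ℂ) / 2) / Pd (x:ℂ) (t:ℂ)) * key
  field_simp
  ring
end

section
/- Let G₂(x,t) = x⁴ + 6(t² + 1)x² + 5t⁴ + 18t² − 3, H₂(x,t) = x⁴ + 2(t² − 3)x² + (t² + 5)(t² − 3), D₂(x,t) = x⁶ + 3(t² + 1)x⁴ + 3(t² − 3)²x² + t⁶ + 27t⁴ + 99t² + 9, and for real parameters α, β set Ĝ₂(x,t;α,β) = G₂(x,t) − 2αt + 2βx, Ĥ₂(x,t;α,β) = t·H₂(x,t) + α(x² − t² + 1) + 2βxt, and D̂₂(x,t;α,β) = D₂(x,t) + 2αt(3x² − t² − 9) − 2βx(x² − 3t² − 3) + α² + β². Then for all real α, β, at every point (x,t) ∈ ℝ² where D̂₂(x,t;α,β) ≠ 0, the function ψ̂₂(x,t;α,β) = (1 − 12·(Ĝ₂(x,t;α,β) + i·Ĥ₂(x,t;α,β))/D̂₂(x,t;α,β))·exp(it/2) satisfies the focusing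 nonlinear Schrödinger equation i·ψ_t + ψ_xx + (1/2)|ψ|²·ψ = 0. -/
/-- `Ĝ₂(x,t;α,β) = G₂(x,t) − 2αt + 2βx`. -/
noncomputable def G2hat (α β x t : ℝ) : ℝ := G2 x t - 2 * α * t + 2 * β * x

/-- `Ĥ₂(x,t;α,β) = t·H₂(x,t) + α(x² − t² + 1) + 2βxt`. -/
noncomputable def H2hat (α β x t : ℝ) : ℝ :=
  t * H2 x t + α * (x ^ 2 - t ^ 2 + 1) + 2 * β * x * t

/-- `D̂₂(x,t;α,β) = D₂(x,t) + 2αt(3x² − t² − 9) − 2βx(x² − 3t² − 3) + α² + β²`. -/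
noncomputable def D2hat (α β x t : ℝ) : ℝ :=
  D2 x t + 2 * α * t * (3 * x ^ 2 - t ^ 2 - 9) - 2 * β * x * (x ^ 2 - 3 * t ^ 2 - 3)
    + α ^ 2 + β ^ 2

/-- The generalised rational solution `ψ̂₂(x,t;α,β)` of the focusing NLS equation. -/
noncomputable def psi2hat (α β : ℝ) (x t : ℝ) : ℂ :=
  (1 - 12 * (((G2hat α β x t : ℝ) : ℂ) + Complex.I * ((H2hat α β x t : ℝ) : ℂ))
      / ((D2hat α β x t : ℝ) : ℂ)) * Complex.exp (Complex.I * (t : ℂ) / 2)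

namespace PSI2aux

/-- generic degree-6 polynomial derivative -/
lemma hasDerivAt_poly6 (c0 c1 c2 c3 c4 c5 c6 x : ℝ) :
    HasDerivAt (fun y : ℝ => c0 + c1*y + c2*y^2 + c3*y^3 + c4*y^4 + c5*y^5 + c6*y^6)
      (c1 + 2*c2*x + 3*c3*x^2 + 4*c4*x^3 + 5*c5*x^4 + 6*c6*x^5) x := by
  have h := ((((((hasDerivAt_const x c0).add ((hasDerivAt_id' x).const_mul c1)).add
      ((hasDerivAt_pow 2 x).const_mul c2)).add ((hasDerivAt_pow 3 x).const_mul c3)).add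
      ((hasDerivAt_pow 4 x).const_mul c4)).add ((hasDerivAt_pow 5 x).const_mul c5)).add
      ((hasDerivAt_pow 6 x).const_mul c6)
  refine h.congr_deriv ?_
  push_cast
  ring

noncomputable def Gp (α β x t : ℝ) : ℝ := 4*x^3 + 12*(t^2+1)*x + 2*β
noncomputable def Gpp (α β x t : ℝ) : ℝ := 12*x^2 + 12*(t^2+1) + 0*α + 0*β
noncomputable def Gq (α β x t : ℝ) : ℝ := 12*t*x^2 + 20*t^3 + 36*t - 2*α + 0*β
noncomputable def Hp (α β x t : ℝ) : ℝ := 4*t*x^3 + 4*t*(t^2-3)*x + 2*α*x + 2*β*t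
noncomputable def Hpp (α β x t : ℝ) : ℝ := 12*t*x^2 + 4*t*(t^2-3) + 2*α + 0*β
noncomputable def Hq (α β x t : ℝ) : ℝ :=
  x^4 + (6*t^2-6)*x^2 + 5*t^4 + 6*t^2 - 15 - 2*α*t + 2*β*x
noncomputable def Dp (α β x t : ℝ) : ℝ :=
  6*x^5 + 12*(t^2+1)*x^3 + 6*(t^2-3)^2*x + 12*α*t*x - 6*β*x^2 + 6*β*t^2 + 6*β
noncomputable def Dpp (α β x t : ℝ) : ℝ :=
  30*x^4 + 36*(t^2+1)*x^2 + 6*(t^2-3)^2 + 12*α*t - 12*β*x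
noncomputable def Dq (α β x t : ℝ) : ℝ :=
  6*t*x^4 + 12*t*(t^2-3)*x^2 + 6*t^5 + 108*t^3 + 198*t + 6*α*x^2 - 6*α*t^2 - 18*α + 12*β*x*t

variable (α β x t : ℝ)

lemma hG_x : HasDerivAt (fun y => G2hat α β y t) (Gp α β x t) x := by
  have h : (fun y => G2hat α β y t)
      = fun y : ℝ => (5*t^4+18*t^2-3-2*α*t) + (2*β)*y + (6*(t^2+1))*y^2 + (0:ℝ)*y^3
          + (1:ℝ)*y^4 + (0:ℝ)*y^5 + (0:ℝ)*y^6 := by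
    funext y; simp only [G2hat, G2]; ring
  rw [h]
  convert hasDerivAt_poly6 _ _ _ _ _ _ _ x using 1
  simp only [Gp]; ring

lemma hH_x : HasDerivAt (fun y => H2hat α β y t) (Hp α β x t) x := by
  have h : (fun y => H2hat α β y t)
      = fun y : ℝ => (t*(t^2+5)*(t^2-3)+α*(1-t^2)) + (2*β*t)*y + (2*t*(t^2-3)+α)*y^2 + (0:ℝ)*y^3
          + t*y^4 + (0:ℝ)*y^5 + (0:ℝ)*y^6 := by
    funext y; simp only [H2hat, H2]; ring
  rw [h]
  convert hasDerivAt_poly6 _ _ _ _ _ _ _ x using 1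
  simp only [Hp]; ring

lemma hD_x : HasDerivAt (fun y => D2hat α β y t) (Dp α β x t) x := by
  have h : (fun y => D2hat α β y t)
      = fun y : ℝ => (t^6+27*t^4+99*t^2+9-2*α*t^3-18*α*t+α^2+β^2) + (6*β*t^2+6*β)*y
          + (3*(t^2-3)^2+6*α*t)*y^2 + (-2*β)*y^3 + (3*(t^2+1))*y^4 + (0:ℝ)*y^5 + (1:ℝ)*y^6 := by
    funext y; simp only [D2hat, D2]; ring
  rw [h]
  convert hasDerivAt_poly6 _ _ _ _ _ _ _ x using 1
  simp only [Dp]; ring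

lemma hGp_x : HasDerivAt (fun y => Gp α β y t) (Gpp α β x t) x := by
  have h : (fun y => Gp α β y t)
      = fun y : ℝ => (2*β) + (12*(t^2+1))*y + (0:ℝ)*y^2 + (4:ℝ)*y^3
          + (0:ℝ)*y^4 + (0:ℝ)*y^5 + (0:ℝ)*y^6 := by
    funext y; simp only [Gp]; ring
  rw [h]
  convert hasDerivAt_poly6 _ _ _ _ _ _ _ x using 1
  simp only [Gpp]; ring

lemma hHp_x : HasDerivAt (fun y => Hp α β y t) (Hpp α β x t) x := by
  have h : (fun y => Hp α β y t)
      = fun y : ℝ => (2*β*t) + (4*t*(t^2-3)+2*α)*y + (0:ℝ)*y^2 + (4*t)*y^3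
          + (0:ℝ)*y^4 + (0:ℝ)*y^5 + (0:ℝ)*y^6 := by
    funext y; simp only [Hp]; ring
  rw [h]
  convert hasDerivAt_poly6 _ _ _ _ _ _ _ x using 1
  simp only [Hpp]; ring

lemma hDp_x : HasDerivAt (fun y => Dp α β y t) (Dpp α β x t) x := by
  have h : (fun y => Dp α β y t)
      = fun y : ℝ => (6*β*t^2+6*β) + (6*(t^2-3)^2+12*α*t)*y + (-6*β)*y^2 + (12*(t^2+1))*y^3
          + (0:ℝ)*y^4 + (6:ℝ)*y^5 + (0:ℝ)*y^6 := by
    funext y; simp only [Dp]; ring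
  rw [h]
  convert hasDerivAt_poly6 _ _ _ _ _ _ _ x using 1
  simp only [Dpp]; ring

lemma hG_t : HasDerivAt (fun s => G2hat α β x s) (Gq α β x t) t := by
  have h : (fun s => G2hat α β x s)
      = fun s : ℝ => (x^4+6*x^2-3+2*β*x) + (-2*α)*s + (6*x^2+18)*s^2 + (0:ℝ)*s^3
          + (5:ℝ)*s^4 + (0:ℝ)*s^5 + (0:ℝ)*s^6 := by
    funext s; simp only [G2hat, G2]; ring
  rw [h]
  convert hasDerivAt_poly6 _ _ _ _ _ _ _ t using 1
  simp only [Gq]; ring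

lemma hH_t : HasDerivAt (fun s => H2hat α β x s) (Hq α β x t) t := by
  have h : (fun s => H2hat α β x s)
      = fun s : ℝ => (α*x^2+α) + (x^4-6*x^2-15+2*β*x)*s + (-α)*s^2 + (2*x^2+2)*s^3
          + (0:ℝ)*s^4 + (1:ℝ)*s^5 + (0:ℝ)*s^6 := by
    funext s; simp only [H2hat, H2]; ring
  rw [h]
  convert hasDerivAt_poly6 _ _ _ _ _ _ _ t using 1
  simp only [Hq]; ring

lemma hD_t : HasDerivAt (fun s => D2hat α β x s) (Dq α β x t) t := by
  have h : (fun s => D2hat α β x s)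
      = fun s : ℝ => (x^6+3*x^4+27*x^2+9-2*β*x^3+6*β*x+α^2+β^2) + (6*α*x^2-18*α)*s
          + (3*x^4-18*x^2+99+6*β*x)*s^2 + (-2*α)*s^3 + (3*x^2+27)*s^4 + (0:ℝ)*s^5 + (1:ℝ)*s^6 := by
    funext s; simp only [D2hat, D2]; ring
  rw [h]
  convert hasDerivAt_poly6 _ _ _ _ _ _ _ t using 1
  simp only [Dq]; ring

end PSI2aux
section RQ
open PSI2aux
variable (α β x t : ℝ)

set_option maxHeartbeats 2000000 in
lemma Rzero :
    24*(D2hat α β x t)*((Hq α β x t)*(D2hat α β x t) - (H2hat α β x t)*(Dq α β x t))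
    - (D2hat α β x t - 12*(G2hat α β x t))*(D2hat α β x t)^2
    - 24*(((Gpp α β x t)*(D2hat α β x t) - (G2hat α β x t)*(Dpp α β x t))*(D2hat α β x t)
        - 2*(Dp α β x t)*((Gp α β x t)*(D2hat α β x t) - (G2hat α β x t)*(Dp α β x t)))
    + (D2hat α β x t - 12*(G2hat α β x t))
        *((D2hat α β x t - 12*(G2hat α β x t))^2 + 144*(H2hat α β x t)^2) = 0 := by
  simp only [D2hat, D2, G2hat, G2, H2hat, H2, Gp, Gpp, Hq, Dp, Dpp, Dq]
  ring

set_option maxHeartbeats 2000000 in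
lemma Qzero :
    -24*(D2hat α β x t)*((Gq α β x t)*(D2hat α β x t) - (G2hat α β x t)*(Dq α β x t))
    + 12*(H2hat α β x t)*(D2hat α β x t)^2
    - 24*(((Hpp α β x t)*(D2hat α β x t) - (H2hat α β x t)*(Dpp α β x t))*(D2hat α β x t)
        - 2*(Dp α β x t)*((Hp α β x t)*(D2hat α β x t) - (H2hat α β x t)*(Dp α β x t)))
    - 12*(H2hat α β x t)
        *((D2hat α β x t - 12*(G2hat α β x t))^2 + 144*(H2hat α β x t)^2) = 0 := by
  simp only [D2hat, D2, G2hat, G2, H2hat, H2, Hp, Hpp, Gq, Dp, Dpp, Dq]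
  ring

end RQ
open PSI2aux in
set_option maxHeartbeats 4000000 in
theorem psi2hat_solves_NLS (α β : ℝ) :
    ∀ x t : ℝ, D2hat α β x t ≠ 0 →
      Complex.I * dTC (psi2hat α β) x t + dXC (dXC (psi2hat α β)) x t
        + (1 / 2) * ((‖psi2hat α β x t‖ : ℂ)) ^ 2 * psi2hat α β x t = 0 := by
  intro x t hD
  have hDc : ((D2hat α β x t : ℝ) : ℂ) ≠ 0 := Complex.ofReal_ne_zero.mpr hD
  -- time derivative of the exponential factor
  have hexp : HasDerivAt (fun s : ℝ => Complex.exp (Complex.I * (s : ℂ) / 2))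
      (Complex.exp (Complex.I * (t : ℂ) / 2) * (Complex.I / 2)) t := by
    have h1 : HasDerivAt (fun s : ℝ => ((s : ℝ) : ℂ)) ((1 : ℝ) : ℂ) t :=
      (hasDerivAt_id' (x := t)).ofReal_comp
    have h3 := ((h1.const_mul Complex.I).div_const 2).cexp
    convert h3 using 1
    norm_num
  -- time derivative of psi2hat
  have hdT : dTC (psi2hat α β) x t =
      -((12 * (((Gq α β x t : ℝ) : ℂ) + Complex.I * ((Hq α β x t : ℝ) : ℂ))
            * ((D2hat α β x t : ℝ) : ℂ)
          - 12 * (((G2hat α β x t : ℝ) : ℂ) + Complex.I * ((H2hat α β x t : ℝ) : ℂ))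
            * ((Dq α β x t : ℝ) : ℂ)) / ((D2hat α β x t : ℝ) : ℂ) ^ 2)
          * Complex.exp (Complex.I * (t : ℂ) / 2)
      + (1 - 12 * (((G2hat α β x t : ℝ) : ℂ) + Complex.I * ((H2hat α β x t : ℝ) : ℂ))
            / ((D2hat α β x t : ℝ) : ℂ))
          * (Complex.exp (Complex.I * (t : ℂ) / 2) * (Complex.I / 2)) := by
    have hNt : HasDerivAt
        (fun s => ((G2hat α β x s : ℝ) : ℂ) + Complex.I * ((H2hat α β x s : ℝ) : ℂ))
        (((Gq α β x t : ℝ) : ℂ) + Complex.I * ((Hq α β x t : ℝ) : ℂ)) t :=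
      ((hG_t α β x t).ofReal_comp).add (((hH_t α β x t).ofReal_comp).const_mul Complex.I)
    have hDct : HasDerivAt (fun s => ((D2hat α β x s : ℝ) : ℂ)) ((Dq α β x t : ℝ) : ℂ) t :=
      (hD_t α β x t).ofReal_comp
    have h := (((hNt.const_mul (12 : ℂ)).div hDct hDc).const_sub 1).mul hexp
    have hfun : (fun s : ℝ => psi2hat α β x s) = (fun s : ℝ =>
        (1 - 12 * (((G2hat α β x s : ℝ) : ℂ) + Complex.I * ((H2hat α β x s : ℝ) : ℂ))
          / ((D2hat α β x s : ℝ) : ℂ)) * Complex.exp (Complex.I * (s : ℂ) / 2)) := rfl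
    simp only [dTC]
    rw [hfun]
    exact h.deriv
  -- first space derivative, valid wherever the denominator is nonzero
  have hdX : ∀ x' : ℝ, D2hat α β x' t ≠ 0 → dXC (psi2hat α β) x' t =
      -((12 * (((Gp α β x' t : ℝ) : ℂ) + Complex.I * ((Hp α β x' t : ℝ) : ℂ))
            * ((D2hat α β x' t : ℝ) : ℂ)
          - 12 * (((G2hat α β x' t : ℝ) : ℂ) + Complex.I * ((H2hat α β x' t : ℝ) : ℂ))
            * ((Dp α β x' t : ℝ) : ℂ)) / ((D2hat α β x' t : ℝ) : ℂ) ^ 2)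
          * Complex.exp (Complex.I * (t : ℂ) / 2) := by
    intro x' hx'
    have hx'c : ((D2hat α β x' t : ℝ) : ℂ) ≠ 0 := Complex.ofReal_ne_zero.mpr hx'
    have hN : HasDerivAt
        (fun y => ((G2hat α β y t : ℝ) : ℂ) + Complex.I * ((H2hat α β y t : ℝ) : ℂ))
        (((Gp α β x' t : ℝ) : ℂ) + Complex.I * ((Hp α β x' t : ℝ) : ℂ)) x' :=
      ((hG_x α β x' t).ofReal_comp).add (((hH_x α β x' t).ofReal_comp).const_mul Complex.I)
    have hDd : HasDerivAt (fun y => ((D2hat α β y t : ℝ) : ℂ)) ((Dp α β x' t : ℝ) : ℂ) x' :=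
      (hD_x α β x' t).ofReal_comp
    have h := (((hN.const_mul (12 : ℂ)).div hDd hx'c).const_sub 1).mul_const
      (Complex.exp (Complex.I * (t : ℂ) / 2))
    have hfun : (fun y : ℝ => psi2hat α β y t) = (fun y : ℝ =>
        (1 - 12 * (((G2hat α β y t : ℝ) : ℂ) + Complex.I * ((H2hat α β y t : ℝ) : ℂ))
          / ((D2hat α β y t : ℝ) : ℂ)) * Complex.exp (Complex.I * (t : ℂ) / 2)) := rfl
    simp only [dXC]
    rw [hfun]
    exact h.deriv
  -- the second space derivative
  have hev : ∀ᶠ y in nhds x, D2hat α β y t ≠ 0 :=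
    ((hD_x α β x t).continuousAt).eventually_ne hD
  have heq : (fun y => dXC (psi2hat α β) y t) =ᶠ[nhds x]
      (fun y => -((12 * (((Gp α β y t : ℝ) : ℂ) + Complex.I * ((Hp α β y t : ℝ) : ℂ))
            * ((D2hat α β y t : ℝ) : ℂ)
          - 12 * (((G2hat α β y t : ℝ) : ℂ) + Complex.I * ((H2hat α β y t : ℝ) : ℂ))
            * ((Dp α β y t : ℝ) : ℂ)) / ((D2hat α β y t : ℝ) : ℂ) ^ 2)
          * Complex.exp (Complex.I * (t : ℂ) / 2)) :=
    hev.mono (fun y hy => hdX y hy)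
  have hdXX : dXC (dXC (psi2hat α β)) x t =
      -((12 * (((Gpp α β x t : ℝ) : ℂ) + Complex.I * ((Hpp α β x t : ℝ) : ℂ))
              * ((D2hat α β x t : ℝ) : ℂ)
            - 12 * (((G2hat α β x t : ℝ) : ℂ) + Complex.I * ((H2hat α β x t : ℝ) : ℂ))
              * ((Dpp α β x t : ℝ) : ℂ)) * ((D2hat α β x t : ℝ) : ℂ) ^ 2
          - (12 * (((Gp α β x t : ℝ) : ℂ) + Complex.I * ((Hp α β x t : ℝ) : ℂ))
              * ((D2hat α β x t : ℝ) : ℂ)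
            - 12 * (((G2hat α β x t : ℝ) : ℂ) + Complex.I * ((H2hat α β x t : ℝ) : ℂ))
              * ((Dp α β x t : ℝ) : ℂ))
              * (2 * ((D2hat α β x t : ℝ) : ℂ) * ((Dp α β x t : ℝ) : ℂ)))
          / (((D2hat α β x t : ℝ) : ℂ) ^ 2) ^ 2
          * Complex.exp (Complex.I * (t : ℂ) / 2) := by
    have hN : HasDerivAt
        (fun y => ((G2hat α β y t : ℝ) : ℂ) + Complex.I * ((H2hat α β y t : ℝ) : ℂ))
        (((Gp α β x t : ℝ) : ℂ) + Complex.I * ((Hp α β x t : ℝ) : ℂ)) x :=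
      ((hG_x α β x t).ofReal_comp).add (((hH_x α β x t).ofReal_comp).const_mul Complex.I)
    have hNp : HasDerivAt
        (fun y => ((Gp α β y t : ℝ) : ℂ) + Complex.I * ((Hp α β y t : ℝ) : ℂ))
        (((Gpp α β x t : ℝ) : ℂ) + Complex.I * ((Hpp α β x t : ℝ) : ℂ)) x :=
      ((hGp_x α β x t).ofReal_comp).add (((hHp_x α β x t).ofReal_comp).const_mul Complex.I)
    have hDd : HasDerivAt (fun y => ((D2hat α β y t : ℝ) : ℂ)) ((Dp α β x t : ℝ) : ℂ) x :=
      (hD_x α β x t).ofReal_comp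
    have hDpd : HasDerivAt (fun y => ((Dp α β y t : ℝ) : ℂ)) ((Dpp α β x t : ℝ) : ℂ) x :=
      (hDp_x α β x t).ofReal_comp
    have hnum := ((hNp.const_mul (12 : ℂ)).mul hDd).sub ((hN.const_mul (12 : ℂ)).mul hDpd)
    have hden := hDd.mul hDd
    have hne2 : ((D2hat α β x t : ℝ) : ℂ) * ((D2hat α β x t : ℝ) : ℂ) ≠ 0 := mul_ne_zero hDc hDc
    have hg1 := ((hnum.div hden hne2).neg).mul_const (Complex.exp (Complex.I * (t : ℂ) / 2))
    have hfun2 : (fun y => -((12 * (((Gp α β y t : ℝ) : ℂ) + Complex.I * ((Hp α β y t : ℝ) : ℂ))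
            * ((D2hat α β y t : ℝ) : ℂ)
          - 12 * (((G2hat α β y t : ℝ) : ℂ) + Complex.I * ((H2hat α β y t : ℝ) : ℂ))
            * ((Dp α β y t : ℝ) : ℂ)) / ((D2hat α β y t : ℝ) : ℂ) ^ 2)
          * Complex.exp (Complex.I * (t : ℂ) / 2))
        = (fun y => -((12 * (((Gp α β y t : ℝ) : ℂ) + Complex.I * ((Hp α β y t : ℝ) : ℂ))
            * ((D2hat α β y t : ℝ) : ℂ)
          - 12 * (((G2hat α β y t : ℝ) : ℂ) + Complex.I * ((H2hat α β y t : ℝ) : ℂ))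
            * ((Dp α β y t : ℝ) : ℂ)) / (((D2hat α β y t : ℝ) : ℂ) * ((D2hat α β y t : ℝ) : ℂ)))
          * Complex.exp (Complex.I * (t : ℂ) / 2)) := by
      funext y
      rw [pow_two]
    have h1 : dXC (dXC (psi2hat α β)) x t = deriv
        (fun y => -((12 * (((Gp α β y t : ℝ) : ℂ) + Complex.I * ((Hp α β y t : ℝ) : ℂ))
            * ((D2hat α β y t : ℝ) : ℂ)
          - 12 * (((G2hat α β y t : ℝ) : ℂ) + Complex.I * ((H2hat α β y t : ℝ) : ℂ))
            * ((Dp α β y t : ℝ) : ℂ)) / ((D2hat α β y t : ℝ) : ℂ) ^ 2)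
          * Complex.exp (Complex.I * (t : ℂ) / 2)) x := by
      simp only [dXC] at heq ⊢
      exact heq.deriv_eq
    rw [h1, hfun2]
    refine hg1.deriv.trans ?_
    simp only [Pi.mul_apply, Pi.sub_apply]
    ring
  -- conjugation facts
  have hconjE : (starRingEnd ℂ) (Complex.exp (Complex.I * (t : ℂ) / 2))
      * Complex.exp (Complex.I * (t : ℂ) / 2) = 1 := by
    rw [← Complex.exp_conj, ← Complex.exp_add]
    have h0 : (starRingEnd ℂ) (Complex.I * (t : ℂ) / 2) + Complex.I * (t : ℂ) / 2 = 0 := by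
      simp [map_div₀, map_ofNat, Complex.conj_I, Complex.conj_ofReal]
      try ring
    rw [h0, Complex.exp_zero]
  have hconjF : (starRingEnd ℂ)
      (1 - 12 * (((G2hat α β x t : ℝ) : ℂ) + Complex.I * ((H2hat α β x t : ℝ) : ℂ))
        / ((D2hat α β x t : ℝ) : ℂ))
      = 1 - 12 * (((G2hat α β x t : ℝ) : ℂ) - Complex.I * ((H2hat α β x t : ℝ) : ℂ))
        / ((D2hat α β x t : ℝ) : ℂ) := by
    simp [map_div₀, map_ofNat, Complex.conj_I, Complex.conj_ofReal]
    try ring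
  have habs : ((‖psi2hat α β x t‖ : ℝ) : ℂ) ^ 2 * psi2hat α β x t =
      (1 - 12 * (((G2hat α β x t : ℝ) : ℂ) - Complex.I * ((H2hat α β x t : ℝ) : ℂ))
          / ((D2hat α β x t : ℝ) : ℂ))
      * ((1 - 12 * (((G2hat α β x t : ℝ) : ℂ) + Complex.I * ((H2hat α β x t : ℝ) : ℂ))
          / ((D2hat α β x t : ℝ) : ℂ))
      * ((1 - 12 * (((G2hat α β x t : ℝ) : ℂ) + Complex.I * ((H2hat α β x t : ℝ) : ℂ))
          / ((D2hat α β x t : ℝ) : ℂ)) * Complex.exp (Complex.I * (t : ℂ) / 2))) := by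
    have h1 : ((‖psi2hat α β x t‖ : ℝ) : ℂ) ^ 2
        = (starRingEnd ℂ) (psi2hat α β x t) * psi2hat α β x t := by
      rw [← Complex.normSq_eq_conj_mul_self]
      norm_cast
      exact Complex.sq_norm _
    have hψ : psi2hat α β x t =
        (1 - 12 * (((G2hat α β x t : ℝ) : ℂ) + Complex.I * ((H2hat α β x t : ℝ) : ℂ))
          / ((D2hat α β x t : ℝ) : ℂ)) * Complex.exp (Complex.I * (t : ℂ) / 2) := rfl
    rw [h1, hψ, map_mul, hconjF]
    linear_combination ((1 - 12 * (((G2hat α β x t : ℝ) : ℂ) - Complex.I * ((H2hat α β x t : ℝ) : ℂ))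
        / ((D2hat α β x t : ℝ) : ℂ))
      * (1 - 12 * (((G2hat α β x t : ℝ) : ℂ) + Complex.I * ((H2hat α β x t : ℝ) : ℂ))
        / ((D2hat α β x t : ℝ) : ℂ))
      * (1 - 12 * (((G2hat α β x t : ℝ) : ℂ) + Complex.I * ((H2hat α β x t : ℝ) : ℂ))
        / ((D2hat α β x t : ℝ) : ℂ))
      * Complex.exp (Complex.I * (t : ℂ) / 2)) * hconjE
  -- cast versions of the two key real polynomial identities
  have hRc := congrArg (fun r : ℝ => (r : ℂ)) (Rzero α β x t)
  push_cast at hRc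
  have hQc := congrArg (fun r : ℝ => (r : ℂ)) (Qzero α β x t)
  push_cast at hQc
  have h2d : (2 * ((D2hat α β x t : ℝ) : ℂ) ^ 4) ≠ 0 :=
    mul_ne_zero two_ne_zero (pow_ne_zero 4 hDc)
  have habs' : (1 / 2 : ℂ) * ((‖psi2hat α β x t‖ : ℝ) : ℂ) ^ 2 * psi2hat α β x t
      = (1 / 2 : ℂ) *
      ((1 - 12 * (((G2hat α β x t : ℝ) : ℂ) - Complex.I * ((H2hat α β x t : ℝ) : ℂ))
          / ((D2hat α β x t : ℝ) : ℂ))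
      * ((1 - 12 * (((G2hat α β x t : ℝ) : ℂ) + Complex.I * ((H2hat α β x t : ℝ) : ℂ))
          / ((D2hat α β x t : ℝ) : ℂ))
      * ((1 - 12 * (((G2hat α β x t : ℝ) : ℂ) + Complex.I * ((H2hat α β x t : ℝ) : ℂ))
          / ((D2hat α β x t : ℝ) : ℂ)) * Complex.exp (Complex.I * (t : ℂ) / 2)))) := by
    rw [mul_assoc, habs]
  rw [hdT, hdXX, habs']
  set gg := ((G2hat α β x t : ℝ) : ℂ) with hgg_def
  set hh := ((H2hat α β x t : ℝ) : ℂ) with hhh_def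
  set dd := ((D2hat α β x t : ℝ) : ℂ) with hdd_def
  set gqt := ((Gq α β x t : ℝ) : ℂ) with hgqt_def
  set hqt := ((Hq α β x t : ℝ) : ℂ) with hhqt_def
  set dqt := ((Dq α β x t : ℝ) : ℂ) with hdqt_def
  set gpx := ((Gp α β x t : ℝ) : ℂ) with hgpx_def
  set hpx := ((Hp α β x t : ℝ) : ℂ) with hhpx_def
  set dpx := ((Dp α β x t : ℝ) : ℂ) with hdpx_def
  set gxx := ((Gpp α β x t : ℝ) : ℂ) with hgxx_def
  set hxx := ((Hpp α β x t : ℝ) : ℂ) with hhxx_def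
  set dxx := ((Dpp α β x t : ℝ) : ℂ) with hdxx_def
  set ee := Complex.exp (Complex.I * (t : ℂ) / 2) with hee_def
  have hw : dd * dd⁻¹ = 1 := mul_inv_cancel₀ hDc
  linear_combination (ee * dd * dd⁻¹ ^ 4 / 2) * hRc
    + (Complex.I * ee * dd * dd⁻¹ ^ 4 / 2) * hQc
    + (ee * dd⁻¹ ^ 4 * ((-24 * dd ^ 3 * hqt + dd ^ 4 + 24 * hh * dd ^ 2 * dqt
        - 144 * hh ^ 2 * dd ^ 2 - 12 * gg * dd ^ 3 + 1728 * gg * hh ^ 2 * dd)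
      + Complex.I * (-12 * hh * dd ^ 3 + 1728 * hh ^ 3 * dd)) / 2) * Complex.I_sq
    + ((-1/2) * ee + (-1/2) * Complex.I ^ 2 * ee + (-1/2) * dd * ee * dd⁻¹ + (-1/2) * dd * Complex.I ^ 2 * ee * dd⁻¹ + (12) * dd * hqt * Complex.I ^ 2 * ee * dd⁻¹ ^ 2 + (12) * dd * gqt * Complex.I * ee * dd⁻¹ ^ 2 + (-1/2) * dd ^ 2 * ee * dd⁻¹ ^ 2 + (-1/2) * dd ^ 2 * Complex.I ^ 2 * ee * dd⁻¹ ^ 2 + (12) * dd ^ 2 * hqt * Complex.I ^ 2 * ee * dd⁻¹ ^ 3 + (12) * dd ^ 2 * gqt * Complex.I * ee * dd⁻¹ ^ 3 + (-1/2) * dd ^ 3 * ee * dd⁻¹ ^ 3 + (-1/2) * dd ^ 3 * Complex.I ^ 2 * ee * dd⁻¹ ^ 3 + (6) * hh * Complex.I * ee * dd⁻¹ + (6) * hh * Complex.I ^ 3 * ee * dd⁻¹ + (-12) * hh * dqt * Complex.I ^ 2 * ee * dd⁻¹ ^ 2 + (6) * hh * dd * Complex.I * ee * dd⁻¹ ^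 2 + (6) * hh * dd * Complex.I ^ 3 * ee * dd⁻¹ ^ 2 + (-12) * hh * dd * dqt * Complex.I ^ 2 * ee * dd⁻¹ ^ 3 + (6) * hh * dd ^ 2 * Complex.I * ee * dd⁻¹ ^ 3 + (6) * hh * dd ^ 2 * Complex.I ^ 3 * ee * dd⁻¹ ^ 3 + (72) * hh ^ 2 * Complex.I ^ 2 * ee * dd⁻¹ ^ 2 + (72) * hh ^ 2 * dd * Complex.I ^ 2 * ee * dd⁻¹ ^ 3 + (-864) * hh ^ 3 * Complex.I ^ 3 * ee * dd⁻¹ ^ 3 + (18) * gg * ee * dd⁻¹ + (6) * gg * Complex.I ^ 2 * ee * dd⁻¹ + (-12) * gg * dqt * Complex.I * ee * dd⁻¹ ^ 2 + (18) * gg * dd * ee * dd⁻¹ ^ 2 + (6) * gg * dd * Complex.I ^ 2 * ee * dd⁻¹ ^ 2 + (-12) * gg * dd * dqt * Complex.I * ee * dd⁻¹ ^ 3 + (18) * gg * dd ^ 2 * ee * dd⁻¹ ^ 3 + (6) * gg * dd ^ 2 * Complex.I ^ 2 * ee * dd⁻¹ ^ 3 + (-144) * gg * hh * Complex.I * ee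 * dd⁻¹ ^ 2 + (-144) * gg * hh * dd * Complex.I * ee * dd⁻¹ ^ 3 + (-864) * gg * hh ^ 2 * Complex.I ^ 2 * ee * dd⁻¹ ^ 3 + (-216) * gg ^ 2 * ee * dd⁻¹ ^ 2 + (-216) * gg ^ 2 * dd * ee * dd⁻¹ ^ 3 + (864) * gg ^ 2 * hh * Complex.I * ee * dd⁻¹ ^ 3 + (864) * gg ^ 3 * ee * dd⁻¹ ^ 3) * hw
end
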